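/- Let λ > 2 and let Γ be the subgroup of PSL₂(ℝ) generated by T = [[1,λ],[0,1]] and S = [[0,-1],[1,0]]. Then the stabilizer in Γ of the point ∞ ∈ ℝ ∪ {∞} (under the fractional linear action) is the cyclic group generated by T. -/

import Mathlib

open Matrix

noncomputable def moebiusAtInfty (g : Matrix.SpecialLinearGroup (Fin 2) ℝ) : OnePoint ℝ :=
  if g.1 1 0 = 0 then OnePoint.infty else OnePoint.some (g.1 0 0 / g.1 1 0)

namespace HeckeAux

abbrev SL2 := Matrix.SpecialLinearGroup (Fin 2) ℝ

def Tm (lam : ℝ) : SL2 := ⟨!![1, lam; 0, 1], by norm_num [Matrix.det_fin_two_of]⟩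
def Sm : SL2 := ⟨!![0, -1; 1, 0], by norm_num [Matrix.det_fin_two_of]⟩

lemma Tm_inv (lam : ℝ) :
    (Tm lam)⁻¹ = (⟨!![1, -lam; 0, 1], by norm_num [Matrix.det_fin_two_of]⟩ : SL2) := by
  apply inv_eq_of_mul_eq_one_right
  ext i j
  erw [Matrix.SpecialLinearGroup.coe_mul]
  simp only [Matrix.SpecialLinearGroup.coe_mul, Tm, Matrix.SpecialLinearGroup.coe_one]
  fin_cases i <;> fin_cases j <;>
    simp [Matrix.mul_apply, Fin.sum_univ_two]

lemma Tm_zpow (lam : ℝ) (n : ℤ) : (Tm lam ^ n).1 = !![1, n * lam; 0, 1] := by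
  induction n using Int.induction_on with
  | zero => simp [Matrix.one_fin_two]
  | succ k ih =>
      rw [_root_.zpow_add_one, Matrix.SpecialLinearGroup.coe_mul, ih]
      ext i j
      fin_cases i <;> fin_cases j <;>
        simp [Tm, Matrix.mul_apply, Fin.sum_univ_two] <;> push_cast <;> ring
  | pred k ih =>
      rw [_root_.zpow_sub_one, Matrix.SpecialLinearGroup.coe_mul, ih, Tm_inv]
      ext i j
      fin_cases i <;> fin_cases j <;>
        simp [Matrix.mul_apply, Fin.sum_univ_two] <;> push_cast <;> ring

inductive NF (lam : ℝ) : SL2 → Prop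
  | base (m : ℤ) : NF lam (Sm * Tm lam ^ m)
  | step (n : ℤ) (hn : n ≠ 0) {h : SL2} (hh : NF lam h) : NF lam (Sm * (Tm lam ^ n * h))

lemma NF.entries {lam : ℝ} (hl : 2 < lam) {h : SL2} (hh : NF lam h) :
    h.1 1 0 ≠ 0 ∧ |h.1 0 0| * (lam - 1) ≤ |h.1 1 0| := by
  induction hh with
  | base m =>
      have : (Sm * Tm lam ^ m).1 = Sm.1 * !![1, (m:ℝ) * lam; 0, 1] := by
        rw [Matrix.SpecialLinearGroup.coe_mul, Tm_zpow]
      rw [this]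
      constructor <;> simp [Sm, Matrix.mul_fin_two]
  | @step n hn h' hh ih =>
      obtain ⟨hc, ha⟩ := ih
      have hcoe : (Sm * (Tm lam ^ n * h')).1 = Sm.1 * (!![1, (n:ℝ) * lam; 0, 1] * h'.1) := by
        rw [Matrix.SpecialLinearGroup.coe_mul, Matrix.SpecialLinearGroup.coe_mul, Tm_zpow]
      have h00 : (Sm * (Tm lam ^ n * h')).1 0 0 = -(h'.1 1 0) := by
        rw [hcoe]
        simp [Sm, Matrix.mul_apply, Fin.sum_univ_two, Matrix.vecMul, dotProduct]
      have h10 : (Sm * (Tm lam ^ n * h')).1 1 0 = h'.1 0 0 + (n:ℝ) * lam * h'.1 1 0 := by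
        rw [hcoe]
        simp [Sm, Matrix.mul_apply, Fin.sum_univ_two, Matrix.vecMul, dotProduct]
      set a := h'.1 0 0
      set c := h'.1 1 0
      have hcpos : (0:ℝ) < |c| := abs_pos.mpr hc
      have hone : (1:ℝ) ≤ |(n:ℝ)| := by
        rw [← Int.cast_abs]; exact_mod_cast Int.one_le_abs hn
      have htri : |(n:ℝ) * lam * c| - |a| ≤ |a + (n:ℝ) * lam * c| := by
        have := abs_sub_abs_le_abs_sub ((n:ℝ) * lam * c) (-a)
        simpa [sub_neg_eq_add, add_comm] using this
      have habs : |(n:ℝ) * lam * c| = |(n:ℝ)| * lam * |c| := by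
        rw [abs_mul, abs_mul, abs_of_pos (by linarith : (0:ℝ) < lam)]
      have hp1 : 0 ≤ (|(n:ℝ)| - 1) * (lam * |c|) :=
        mul_nonneg (by linarith) (mul_nonneg (by linarith) (abs_nonneg c))
      have hp2 : 0 ≤ |a| * (lam - 2) := mul_nonneg (abs_nonneg a) (by linarith)
      have key : |c| * (lam - 1) ≤ |a + (n:ℝ) * lam * c| := by
        rw [habs] at htri
        nlinarith [abs_nonneg a]
      have hne : a + (n:ℝ) * lam * c ≠ 0 := by
        intro h0
        rw [h0, abs_zero] at key
        nlinarith
      rw [h00, h10]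
      exact ⟨hne, by rw [abs_neg]; exact key⟩

def P (lam : ℝ) (g : SL2) : Prop :=
  ∃ n : ℤ, (g.1 = (Tm lam ^ n).1 ∨ g.1 = -((Tm lam ^ n).1)) ∨
    ∃ h : SL2, NF lam h ∧
      (g.1 = ((Tm lam ^ n) * h).1 ∨ g.1 = -(((Tm lam ^ n) * h).1))

lemma Sm_sq : Sm.1 * Sm.1 = -1 := by
  ext i j
  fin_cases i <;> fin_cases j <;>
    simp [Sm, Matrix.mul_apply, Fin.sum_univ_two, Matrix.one_apply]

lemma Sm_sq_mul (M : Matrix (Fin 2) (Fin 2) ℝ) : Sm.1 * (Sm.1 * M) = -M := by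
  rw [← mul_assoc, Sm_sq, neg_one_mul]

lemma Sm_inv_coe : (Sm⁻¹).1 = -Sm.1 := by
  have : Sm⁻¹ = (⟨!![0, 1; -1, 0], by norm_num [Matrix.det_fin_two_of]⟩ : SL2) := by
    apply inv_eq_of_mul_eq_one_right
    ext i j
    erw [Matrix.SpecialLinearGroup.coe_mul]
    simp only [Matrix.SpecialLinearGroup.coe_mul, Sm, Matrix.SpecialLinearGroup.coe_one]
    fin_cases i <;> fin_cases j <;> simp [Matrix.mul_apply, Fin.sum_univ_two]
  rw [this]
  ext i j; fin_cases i <;> fin_cases j <;> simp [Sm]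

lemma P_S_mul {lam : ℝ} {g : SL2} (hg : P lam g) : P lam (Sm * g) := by
  obtain ⟨n, h1 | ⟨h, hNF, h2⟩⟩ := hg
  · -- g = ± T^n, S*g = ± T^0 * (S T^n)
    refine ⟨0, Or.inr ⟨Sm * Tm lam ^ n, NF.base n, ?_⟩⟩
    erw [Matrix.SpecialLinearGroup.coe_mul]
    rcases h1 with h1 | h1 <;> rw [h1] <;>
      simp [Matrix.SpecialLinearGroup.coe_mul, mul_neg, mul_assoc]
  · by_cases hn : n = 0
    · subst hn
      -- g = ± h ; S * h cancels
      cases hNF with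
      | base m =>
          refine ⟨m, Or.inl ?_⟩
          have hg1 : g.1 = (Sm * Tm lam ^ m).1 ∨ g.1 = -((Sm * Tm lam ^ m).1) := by
            simpa using h2
          rcases hg1 with h2 | h2
          · right
            rw [Matrix.SpecialLinearGroup.coe_mul, h2, Matrix.SpecialLinearGroup.coe_mul,
              Sm_sq_mul]
          · left
            rw [Matrix.SpecialLinearGroup.coe_mul] at h2
            rw [Matrix.SpecialLinearGroup.coe_mul, h2, mul_neg, Sm_sq_mul, neg_neg]
      | @step m hm h' hh' =>
          refine ⟨m, Or.inr ⟨h', hh', ?_⟩⟩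
          have hg1 : g.1 = (Sm * (Tm lam ^ m * h')).1 ∨
              g.1 = -((Sm * (Tm lam ^ m * h')).1) := by
            simpa using h2
          rcases hg1 with h2 | h2
          · right
            rw [Matrix.SpecialLinearGroup.coe_mul, h2, Matrix.SpecialLinearGroup.coe_mul,
              Sm_sq_mul]
          · left
            rw [Matrix.SpecialLinearGroup.coe_mul] at h2
            rw [Matrix.SpecialLinearGroup.coe_mul, h2, mul_neg, Sm_sq_mul, neg_neg]
    · refine ⟨0, Or.inr ⟨Sm * (Tm lam ^ n * h), NF.step n hn hNF, ?_⟩⟩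
      rcases h2 with h2 | h2 <;>
        rw [Matrix.SpecialLinearGroup.coe_mul, h2] <;>
        simp [Matrix.SpecialLinearGroup.coe_mul, mul_neg, mul_assoc]

lemma P_T_mul {lam : ℝ} {g : SL2} (hg : P lam g) : P lam (Tm lam * g) := by
  obtain ⟨n, h1 | ⟨h, hNF, h2⟩⟩ := hg
  · refine ⟨n + 1, Or.inl ?_⟩
    have hT : Tm lam * Tm lam ^ n = Tm lam ^ (n + 1) := by
      rw [add_comm, _root_.zpow_add, zpow_one]
    rcases h1 with h1 | h1 <;>
      rw [Matrix.SpecialLinearGroup.coe_mul, h1] <;>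
      [exact Or.inl (by rw [← Matrix.SpecialLinearGroup.coe_mul, hT]);
       exact Or.inr (by rw [mul_neg, ← Matrix.SpecialLinearGroup.coe_mul, hT])]
  · refine ⟨n + 1, Or.inr ⟨h, hNF, ?_⟩⟩
    have hT : Tm lam * (Tm lam ^ n * h) = Tm lam ^ (n + 1) * h := by
      rw [← mul_assoc, add_comm, _root_.zpow_add, zpow_one]
    rcases h2 with h2 | h2 <;>
      rw [Matrix.SpecialLinearGroup.coe_mul, h2] <;>
      [exact Or.inl (by rw [← Matrix.SpecialLinearGroup.coe_mul, hT]);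
       exact Or.inr (by rw [mul_neg, ← Matrix.SpecialLinearGroup.coe_mul, hT])]

lemma P_Tinv_mul {lam : ℝ} {g : SL2} (hg : P lam g) : P lam ((Tm lam)⁻¹ * g) := by
  obtain ⟨n, h1 | ⟨h, hNF, h2⟩⟩ := hg
  · refine ⟨n - 1, Or.inl ?_⟩
    have hT : (Tm lam)⁻¹ * Tm lam ^ n = Tm lam ^ (n - 1) := by
      rw [sub_eq_neg_add, _root_.zpow_add, _root_.zpow_neg, zpow_one]
    rcases h1 with h1 | h1 <;>
      rw [Matrix.SpecialLinearGroup.coe_mul, h1] <;>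
      [exact Or.inl (by rw [← Matrix.SpecialLinearGroup.coe_mul, hT]);
       exact Or.inr (by rw [mul_neg, ← Matrix.SpecialLinearGroup.coe_mul, hT])]
  · refine ⟨n - 1, Or.inr ⟨h, hNF, ?_⟩⟩
    have hT : (Tm lam)⁻¹ * (Tm lam ^ n * h) = Tm lam ^ (n - 1) * h := by
      rw [← mul_assoc, sub_eq_neg_add, _root_.zpow_add, _root_.zpow_neg, zpow_one]
    rcases h2 with h2 | h2 <;>
      rw [Matrix.SpecialLinearGroup.coe_mul, h2] <;>
      [exact Or.inl (by rw [← Matrix.SpecialLinearGroup.coe_mul, hT]);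
       exact Or.inr (by rw [mul_neg, ← Matrix.SpecialLinearGroup.coe_mul, hT])]

lemma P_Sinv_mul {lam : ℝ} {g : SL2} (hg : P lam g) : P lam (Sm⁻¹ * g) := by
  have h1 : P lam (Sm * g) := P_S_mul hg
  obtain ⟨n, h2 | ⟨h, hNF, h3⟩⟩ := h1
  · refine ⟨n, Or.inl ?_⟩
    have hc : (Sm⁻¹ * g).1 = -((Sm * g).1) := by
      rw [Matrix.SpecialLinearGroup.coe_mul, Matrix.SpecialLinearGroup.coe_mul, Sm_inv_coe,
        neg_mul]
    rcases h2 with h2 | h2 <;> rw [hc, h2]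
    · exact Or.inr rfl
    · exact Or.inl (neg_neg _)
  · refine ⟨n, Or.inr ⟨h, hNF, ?_⟩⟩
    have hc : (Sm⁻¹ * g).1 = -((Sm * g).1) := by
      rw [Matrix.SpecialLinearGroup.coe_mul, Matrix.SpecialLinearGroup.coe_mul, Sm_inv_coe,
        neg_mul]
    rcases h3 with h3 | h3 <;> rw [hc, h3]
    · exact Or.inr rfl
    · exact Or.inl (neg_neg _)

lemma P_of_mem {lam : ℝ} {g : SL2} (hg : g ∈ Subgroup.closure {Tm lam, Sm}) : P lam g := by
  induction hg using Subgroup.closure_induction_left with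
  | one => exact ⟨0, Or.inl (Or.inl (by simp))⟩
  | mul_left x hx y hy ih =>
      rcases hx with rfl | rfl
      · exact P_T_mul ih
      · exact P_S_mul ih
  | inv_mul_cancel x hx y hy ih =>
      rcases hx with rfl | rfl
      · exact P_Tinv_mul ih
      · exact P_Sinv_mul ih

end HeckeAux

open HeckeAux in
theorem statement1 (lam : ℝ) (hlam : 2 < lam) :
    let T : Matrix.SpecialLinearGroup (Fin 2) ℝ :=
      ⟨!![1, lam; 0, 1], by norm_num [Matrix.det_fin_two_of]⟩
    let S : Matrix.SpecialLinearGroup (Fin 2) ℝ :=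
      ⟨!![0, -1; 1, 0], by norm_num [Matrix.det_fin_two_of]⟩
    ∀ g ∈ Subgroup.closure {T, S},
      (moebiusAtInfty g = OnePoint.infty ↔
        ∃ n : ℤ, g.1 = (T ^ n).1 ∨ g.1 = -((T ^ n).1)) := by
  intro T S g hg
  have hT : T = Tm lam := rfl
  have hS : S = Sm := rfl
  rw [hT, hS] at hg
  rw [hT]
  have hP : P lam g := P_of_mem hg
  constructor
  · intro hm
    have hc : g.1 1 0 = 0 := by
      by_contra hc
      rw [moebiusAtInfty, if_neg hc] at hm
      exact (OnePoint.coe_ne_infty _) hm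
    obtain ⟨n, h1 | ⟨h, hNF, h2⟩⟩ := hP
    · exact ⟨n, h1⟩
    · exfalso
      obtain ⟨hcne, -⟩ := hNF.entries hlam
      have hent : ((Tm lam ^ n) * h).1 1 0 = h.1 1 0 := by
        rw [Matrix.SpecialLinearGroup.coe_mul, Tm_zpow]
        simp [Matrix.mul_apply, Fin.sum_univ_two]
      rcases h2 with h2 | h2 <;> rw [h2] at hc
      · rw [hent] at hc; exact hcne hc
      · simp only [Matrix.neg_apply, neg_eq_zero] at hc
        rw [hent] at hc; exact hcne hc
  · rintro ⟨n, hn | hn⟩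
    · have : g.1 1 0 = 0 := by rw [hn, Tm_zpow]; simp
      rw [moebiusAtInfty, if_pos this]
    · have : g.1 1 0 = 0 := by
        rw [hn]
        simp only [Matrix.neg_apply, neg_eq_zero]
        rw [Tm_zpow]; simp
      rw [moebiusAtInfty, if_pos this]
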